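/- (Clifford's Theorem for numerical semigroups) Let S be a numerical semigroup with genus g(S). Then for every x ∈ ℕ with x ≤ 2g(S) - 2, we have |S ∩ [0,x]| ≤ x/2 + 1. -/

import Mathlib

/-- σ(x) = x/2 - |S ∩ [0,x]| + 1 -/
noncomputable def sig (S : Set ℕ) (x : ℕ) : ℚ :=
  (x : ℚ) / 2 - ((S ∩ Set.Icc 0 x).ncard : ℚ) + 1

/-- ngCond: least c with [c,∞) ⊆ S -/
noncomputable def ngCond (S : Set ℕ) : ℕ := sInf {k : ℕ | ∀ n, k ≤ n → n ∈ S}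

open scoped Classical

/-- finset version of S ∩ [0,t] -/
noncomputable def Lfin (S : Set ℕ) (t : ℕ) : Finset ℕ :=
  (Finset.Icc 0 t).filter (fun n => n ∈ S)

lemma Lfin_ncard (S : Set ℕ) (t : ℕ) : (S ∩ Set.Icc 0 t).ncard = (Lfin S t).card := by
  have h : (S ∩ Set.Icc 0 t) = ↑(Lfin S t) := by
    ext n
    simp [Lfin, Finset.mem_filter, Finset.mem_Icc, Set.mem_Icc, and_comm]
  rw [h, Set.ncard_coe_finset]

lemma Lfin_count (S : Set ℕ) (t : ℕ) :
    (Lfin S t).card + ((Finset.Icc 0 t).filter (fun n => n ∉ S)).card = t + 1 := by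
  rw [Lfin, Finset.card_filter_add_card_filter_not, Nat.card_Icc]
  omega

theorem stmt5 (S : Set ℕ) (h0 : (0:ℕ) ∈ S)
    (hadd : ∀ a ∈ S, ∀ b ∈ S, a + b ∈ S) (hfin : Sᶜ.Finite)
    (x : ℕ) (hx : x + 2 ≤ 2 * Sᶜ.ncard) :
    ((S ∩ Set.Icc 0 x).ncard : ℚ) ≤ (x : ℚ) / 2 + 1 := by
  rw [Lfin_ncard]
  suffices h : 2 * (Lfin S x).card ≤ x + 2 by
    have h2 := (Nat.cast_le (α := ℚ)).mpr h
    push_cast at h2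
    linarith
  set T := hfin.toFinset with hT
  have hgx : x + 2 ≤ 2 * T.card := by
    rwa [Set.ncard_eq_toFinset_card _ hfin] at hx
  have hTne : T.Nonempty := by
    rw [Finset.nonempty_iff_ne_empty]
    intro h
    rw [h] at hgx
    simp at hgx
  set F := T.max' hTne with hF
  have hFgap : F ∉ S := by
    have hm : F ∈ T := T.max'_mem hTne
    rw [hT, Set.Finite.mem_toFinset] at hm
    exact hm
  have hgaple : ∀ n, n ∉ S → n ≤ F := by
    intro n hn
    exact T.le_max' n (by rw [hT, Set.Finite.mem_toFinset]; exact hn)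
  have key : ∀ t, F ≤ t → (Lfin S t).card + T.card = t + 1 := by
    intro t ht
    have heq : (Finset.Icc 0 t).filter (fun n => n ∉ S) = T := by
      ext n
      simp only [Finset.mem_filter, Finset.mem_Icc, hT, Set.Finite.mem_toFinset,
        Set.mem_compl_iff]
      constructor
      · exact fun h => h.2
      · exact fun h => ⟨⟨Nat.zero_le _, le_trans (hgaple n h) ht⟩, h⟩
    rw [← heq]
    exact Lfin_count S t
  have h0x : 0 ∈ Lfin S x := by simp [Lfin, h0]
  have hax : 1 ≤ (Lfin S x).card := Finset.card_pos.mpr ⟨0, h0x⟩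
  rcases le_or_gt F x with hca | hca
  · have hk := key x hca
    omega
  · -- hard case : x < F
    obtain ⟨y, hy⟩ : ∃ y, F = x + y + 1 := ⟨F - x - 1, by omega⟩
    have h0y : 0 ∈ Lfin S y := by simp [Lfin, h0]
    -- pairing injection  z ↦ F - z
    have claim1 : (Lfin S x).card ≤ ((Finset.Icc (y+1) F).filter (fun n => n ∉ S)).card := by
      apply Finset.card_le_card_of_injOn (fun z => F - z)
      · intro z hz
        simp only [Lfin, Finset.mem_coe, Finset.mem_filter, Finset.mem_Icc] at hz ⊢
        obtain ⟨⟨-, hzx⟩, hzS⟩ := hz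
        refine ⟨⟨by omega, by omega⟩, ?_⟩
        intro hmem
        apply hFgap
        have hsum := hadd z hzS (F - z) hmem
        have : z + (F - z) = F := by omega
        rwa [this] at hsum
      · intro a ha b hb hab
        simp only [Lfin, Finset.coe_filter, Set.mem_setOf_eq, Finset.mem_Icc] at ha hb
        simp only at hab
        omega
    have count_up : ((Finset.Icc (y+1) F).filter (fun n => n ∈ S)).card
        + ((Finset.Icc (y+1) F).filter (fun n => n ∉ S)).card = x + 1 := by
      rw [Finset.card_filter_add_card_filter_not, Nat.card_Icc]
      omega
    have hdisj : Disjoint (Lfin S y) ((Finset.Icc (y+1) F).filter (fun n => n ∈ S)) := by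
      rw [Finset.disjoint_left]
      intro n hn hn'
      simp only [Lfin, Finset.mem_filter, Finset.mem_Icc] at hn hn'
      omega
    have split : (Lfin S F).card
        = (Lfin S y).card + ((Finset.Icc (y+1) F).filter (fun n => n ∈ S)).card := by
      rw [← Finset.card_union_of_disjoint hdisj]
      congr 1
      ext n
      simp only [Lfin, Finset.mem_union, Finset.mem_filter, Finset.mem_Icc]
      constructor
      · rintro ⟨⟨-, hnF⟩, hnS⟩
        rcases le_or_gt n y with h | h
        · exact Or.inl ⟨⟨Nat.zero_le _, h⟩, hnS⟩
        · exact Or.inr ⟨⟨h, hnF⟩, hnS⟩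
      · rintro (⟨⟨-, h⟩, hnS⟩ | ⟨⟨-, h⟩, hnS⟩)
        · exact ⟨⟨Nat.zero_le _, by omega⟩, hnS⟩
        · exact ⟨⟨Nat.zero_le _, h⟩, hnS⟩
    have keyF := key F le_rfl
    have hLeq : Lfin S F = Lfin S (x+y) := by
      ext n
      simp only [Lfin, Finset.mem_filter, Finset.mem_Icc]
      constructor
      · rintro ⟨⟨-, hnF⟩, hnS⟩
        refine ⟨⟨Nat.zero_le _, ?_⟩, hnS⟩
        rcases eq_or_lt_of_le hnF with h | h
        · exact absurd (h ▸ hnS) hFgap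
        · omega
      · rintro ⟨⟨-, hn⟩, hnS⟩
        exact ⟨⟨Nat.zero_le _, by omega⟩, hnS⟩
    -- sumset argument
    have hney : (Lfin S y).Nonempty := ⟨0, h0y⟩
    set b := (Lfin S y).max' hney with hb
    have hbmem : b ∈ Lfin S y := (Lfin S y).max'_mem hney
    have hbmax : ∀ n ∈ Lfin S y, n ≤ b := fun n hn => (Lfin S y).le_max' n hn
    have hbS : b ∈ S ∧ b ≤ y := by
      simp only [Lfin, Finset.mem_filter, Finset.mem_Icc] at hbmem
      exact ⟨hbmem.2, hbmem.1.2⟩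
    have sumset : (Lfin S y).card + ((Lfin S x).card - 1) ≤ (Lfin S (x+y)).card := by
      have hsub : Lfin S y ∪ ((Lfin S x).erase 0).image (fun a => a + b) ⊆ Lfin S (x+y) := by
        intro n hn
        rw [Finset.mem_union] at hn
        simp only [Lfin, Finset.mem_filter, Finset.mem_Icc] at *
        rcases hn with h | h
        · exact ⟨⟨Nat.zero_le _, by omega⟩, h.2⟩
        · simp only [Finset.mem_image, Finset.mem_erase, Lfin, Finset.mem_filter,
            Finset.mem_Icc] at h
          obtain ⟨a, ⟨hane, ⟨-, hax'⟩, haS⟩, rfl⟩ := h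
          exact ⟨⟨Nat.zero_le _, by omega⟩, hadd a haS b hbS.1⟩
      have hdisj2 : Disjoint (Lfin S y) (((Lfin S x).erase 0).image (fun a => a + b)) := by
        rw [Finset.disjoint_left]
        intro n hn hn'
        simp only [Finset.mem_image, Finset.mem_erase] at hn'
        obtain ⟨a, ⟨hane, -⟩, rfl⟩ := hn'
        have := hbmax _ hn
        omega
      have hcard : (Lfin S y ∪ ((Lfin S x).erase 0).image (fun a => a + b)).card
          = (Lfin S y).card + ((Lfin S x).card - 1) := by
        rw [Finset.card_union_of_disjoint hdisj2,
          Finset.card_image_of_injective _ (add_left_injective b),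
          Finset.card_erase_of_mem h0x]
      rw [← hcard]
      exact Finset.card_le_card hsub
    rw [← hLeq] at sumset
    omega
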